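/- Let 𝒴 > 0 and α ∈ (−1,1). There exists a constant C > 0 (depending only on 𝒴 and α) such that for every function v : [0,𝒴] → ℝ that is continuous on [0,𝒴] and continuously differentiable on (0,𝒴) with ∫₀^𝒴 y^α v(y)² dy < ∞ and ∫₀^𝒴 y^α v′(y)² dy < ∞, it holds that |v(0)|² ≤ C ( (∫₀^𝒴 y^α v(y)² dy)^{(1−α)/2} · (∫₀^𝒴 y^α v′(y)² dy)^{(1+α)/2} + ∫₀^𝒴 y^α v(y)² dy ). -/

import Mathlib

noncomputable section
open MeasureTheory Metric Set
open scoped ENNReal NNReal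

namespace Statement6Aux

lemma ptwise {Y α : ℝ} (hY : 0 < Y) (hα1 : -1 < α) (hα2 : α < 1)
    {v : ℝ → ℝ} (hvc : ContinuousOn v (Set.Icc 0 Y))
    (hv1 : ContDiffOn ℝ 1 v (Set.Ioo 0 Y))
    (hD : MeasureTheory.IntegrableOn (fun t => t ^ α * (deriv v t) ^ 2) (Set.Ioo 0 Y))
    {y : ℝ} (hy : y ∈ Set.Ioo 0 Y) :
    (v y - v 0) ^ 2 ≤ y ^ (1 - α) / (1 - α) * ∫ t in Set.Ioo 0 Y, t ^ α * (deriv v t) ^ 2 := by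
  obtain ⟨hy0, hyY⟩ := hy
  have h1α : (0:ℝ) < 1 - α := by linarith
  set D : ℝ := ∫ t in Set.Ioo 0 Y, t ^ α * (deriv v t) ^ 2 with hDdef
  have hDnn : 0 ≤ D := setIntegral_nonneg measurableSet_Ioo
    (fun t ht => mul_nonneg (Real.rpow_nonneg ht.1.le _) (sq_nonneg _))
  have hderiv_cont : ContinuousOn (deriv v) (Set.Ioo 0 Y) :=
    hv1.continuousOn_deriv_of_isOpen isOpen_Ioo le_rfl
  set a : ℝ := y ^ (1 - α) / (1 - α) with hadef
  have hann : 0 ≤ a := div_nonneg (Real.rpow_nonneg hy0.le _) h1α.le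
  have sqrt_sq : ∀ x : ℝ, 0 ≤ x → (x ^ ((1:ℝ)/2)) ^ 2 = x := by
    intro x hx
    rw [← Real.rpow_natCast (x ^ ((1:ℝ)/2)) 2, ← Real.rpow_mul hx]
    norm_num
  have key : ∀ ε ∈ Set.Ioo 0 y, (v y - v ε) ^ 2 ≤ a * D := by
    intro ε hε
    obtain ⟨hε0, hεy⟩ := hε
    have hsub : Set.Icc ε y ⊆ Set.Ioo 0 Y := fun x hx =>
      ⟨lt_of_lt_of_le hε0 hx.1, lt_of_le_of_lt hx.2 hyY⟩
    have hftc : ∫ t in ε..y, deriv v t = v y - v ε := by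
      apply intervalIntegral.integral_eq_sub_of_hasDerivAt
      · intro x hx
        rw [Set.uIcc_of_le hεy.le] at hx
        exact ((hv1.contDiffAt (isOpen_Ioo.mem_nhds (hsub hx))).differentiableAt
          one_ne_zero).hasDerivAt
      · apply ContinuousOn.intervalIntegrable
        rw [Set.uIcc_of_le hεy.le]
        exact hderiv_cont.mono hsub
    have habs : |v y - v ε| ≤ ∫ t in Set.Ioc ε y, |deriv v t| := by
      rw [← hftc]
      calc |∫ t in ε..y, deriv v t| ≤ ∫ t in ε..y, |deriv v t| :=
            intervalIntegral.abs_integral_le_integral_abs hεy.le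
        _ = ∫ t in Set.Ioc ε y, |deriv v t| := intervalIntegral.integral_of_le hεy.le
    set f : ℝ → ℝ := fun t => t ^ (-(α/2)) with hfdef
    set g : ℝ → ℝ := fun t => t ^ (α/2) * |deriv v t| with hgdef
    have hfc : ContinuousOn f (Set.Icc ε y) := fun t ht =>
      (Real.continuousAt_rpow_const t _ (Or.inl (ne_of_gt (lt_of_lt_of_le hε0 ht.1)))).continuousWithinAt
    have hgc : ContinuousOn g (Set.Icc ε y) := by
      apply ContinuousOn.mul
      · exact fun t ht =>
          (Real.continuousAt_rpow_const t _ (Or.inl (ne_of_gt (lt_of_lt_of_le hε0 ht.1)))).continuousWithinAt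
      · exact (hderiv_cont.mono hsub).abs
    have h22 : (2:ℝ).HolderConjugate 2 := Real.holderConjugate_iff.mpr ⟨by norm_num, by norm_num⟩
    have hmemf : MemLp f (ENNReal.ofReal 2) (volume.restrict (Set.Ioc ε y)) := by
      have : (ENNReal.ofReal 2) = 2 := by norm_num
      rw [this, memLp_two_iff_integrable_sq
        ((hfc.mono Set.Ioc_subset_Icc_self).aestronglyMeasurable measurableSet_Ioc)]
      exact ((hfc.pow 2).integrableOn_Icc).mono_set Set.Ioc_subset_Icc_self
    have hmemg : MemLp g (ENNReal.ofReal 2) (volume.restrict (Set.Ioc ε y)) := by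
      have : (ENNReal.ofReal 2) = 2 := by norm_num
      rw [this, memLp_two_iff_integrable_sq
        ((hgc.mono Set.Ioc_subset_Icc_self).aestronglyMeasurable measurableSet_Ioc)]
      exact ((hgc.pow 2).integrableOn_Icc).mono_set Set.Ioc_subset_Icc_self
    have hfnn : 0 ≤ᵐ[volume.restrict (Set.Ioc ε y)] f := by
      filter_upwards [ae_restrict_mem measurableSet_Ioc] with t ht
      exact Real.rpow_nonneg (le_of_lt (lt_trans hε0 ht.1)) _
    have hgnn : 0 ≤ᵐ[volume.restrict (Set.Ioc ε y)] g := by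
      filter_upwards [ae_restrict_mem measurableSet_Ioc] with t ht
      exact mul_nonneg (Real.rpow_nonneg (le_of_lt (lt_trans hε0 ht.1)) _) (abs_nonneg _)
    have hCS := MeasureTheory.integral_mul_le_Lp_mul_Lq_of_nonneg h22 hfnn hgnn hmemf hmemg
    -- identify ∫ f*g with ∫ |deriv v|
    have hfg : ∫ t in Set.Ioc ε y, f t * g t = ∫ t in Set.Ioc ε y, |deriv v t| := by
      apply setIntegral_congr_fun measurableSet_Ioc
      intro t ht
      have ht0 : 0 < t := lt_trans hε0 ht.1
      simp only [hfdef, hgdef]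
      rw [← mul_assoc, ← Real.rpow_add ht0]
      norm_num
    -- identify and bound ∫ f^2
    have hf2 : ∫ t in Set.Ioc ε y, f t ^ (2:ℝ) ≤ a := by
      have heq : ∫ t in Set.Ioc ε y, f t ^ (2:ℝ) = ∫ t in Set.Ioc ε y, t ^ (-α) := by
        apply setIntegral_congr_fun measurableSet_Ioc
        intro t ht
        have ht0 : (0:ℝ) ≤ t := le_of_lt (lt_trans hε0 ht.1)
        simp only [hfdef]
        rw [← Real.rpow_mul ht0]
        norm_num
      rw [heq, ← intervalIntegral.integral_of_le hεy.le,
        integral_rpow (Or.inl (by linarith : (-1:ℝ) < -α))]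
      have hεp : 0 ≤ ε ^ (-α + 1) := Real.rpow_nonneg hε0.le _
      have : -α + 1 = 1 - α := by ring
      rw [this, hadef]
      have hεp : 0 ≤ ε ^ (1 - α) := Real.rpow_nonneg hε0.le _
      apply div_le_div_of_nonneg_right ?_ h1α.le
      linarith
    have hg2 : ∫ t in Set.Ioc ε y, g t ^ (2:ℝ) ≤ D := by
      have heq : ∫ t in Set.Ioc ε y, g t ^ (2:ℝ)
          = ∫ t in Set.Ioc ε y, t ^ α * (deriv v t) ^ 2 := by
        apply setIntegral_congr_fun measurableSet_Ioc
        intro t ht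
        have ht0 : (0:ℝ) < t := lt_trans hε0 ht.1
        simp only [hgdef]
        rw [Real.rpow_two, mul_pow, sq_abs]
        congr 1
        rw [← Real.rpow_natCast (t ^ (α/2)) 2, ← Real.rpow_mul ht0.le]
        norm_num
      rw [heq]
      apply setIntegral_mono_set hD
      · filter_upwards [ae_restrict_mem measurableSet_Ioo] with t ht
        exact mul_nonneg (Real.rpow_nonneg ht.1.le _) (sq_nonneg _)
      · exact HasSubset.Subset.eventuallyLE
          (fun x hx => ⟨lt_trans hε0 hx.1, lt_of_le_of_lt hx.2 hyY⟩)
    have hf2nn : 0 ≤ ∫ t in Set.Ioc ε y, f t ^ (2:ℝ) :=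
      setIntegral_nonneg measurableSet_Ioc (fun t ht =>
        Real.rpow_nonneg (Real.rpow_nonneg (le_of_lt (lt_trans hε0 ht.1)) _) _)
    have hg2nn : 0 ≤ ∫ t in Set.Ioc ε y, g t ^ (2:ℝ) :=
      setIntegral_nonneg measurableSet_Ioc (fun t ht =>
        Real.rpow_nonneg (mul_nonneg
          (Real.rpow_nonneg (le_of_lt (lt_trans hε0 ht.1)) _) (abs_nonneg _)) _)
    have h1 : |v y - v ε| ≤ a ^ ((1:ℝ)/2) * D ^ ((1:ℝ)/2) := by
      refine le_trans habs ?_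
      rw [← hfg]
      refine le_trans hCS ?_
      have h2eq : (1:ℝ)/(2:ℝ) = 1/2 := rfl
      exact mul_le_mul (Real.rpow_le_rpow hf2nn hf2 (by norm_num))
        (Real.rpow_le_rpow hg2nn hg2 (by norm_num))
        (Real.rpow_nonneg hg2nn _) (Real.rpow_nonneg hann _)
    calc (v y - v ε) ^ 2 = |v y - v ε| ^ 2 := (sq_abs _).symm
      _ ≤ (a ^ ((1:ℝ)/2) * D ^ ((1:ℝ)/2)) ^ 2 := by
          exact pow_le_pow_left₀ (abs_nonneg _) h1 2
      _ = a * D := by rw [mul_pow, sqrt_sq a hann, sqrt_sq D hDnn]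
  -- pass to the limit ε → 0⁺
  have hcont : Filter.Tendsto (fun ε => (v y - v ε) ^ 2)
      (nhdsWithin 0 (Set.Ioi 0)) (nhds ((v y - v 0) ^ 2)) := by
    have h0 : ContinuousWithinAt v (Set.Icc 0 Y) 0 := hvc 0 ⟨le_refl 0, hY.le⟩
    have hv0 : Filter.Tendsto v (nhdsWithin 0 (Set.Ioi 0)) (nhds (v 0)) := by
      apply h0.tendsto.mono_left
      apply nhdsWithin_le_of_mem
      exact Filter.mem_of_superset (Ioo_mem_nhdsGT hY)
        (fun x hx => ⟨hx.1.le, hx.2.le⟩)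
    exact (tendsto_const_nhds.sub hv0).pow 2
  refine le_of_tendsto hcont ?_
  filter_upwards [Ioo_mem_nhdsGT hy0]
    with ε hε
  exact key ε hε


lemma core {Y α : ℝ} (hY : 0 < Y) (hα1 : -1 < α) (hα2 : α < 1)
    {v : ℝ → ℝ} (hvc : ContinuousOn v (Set.Icc 0 Y))
    (hv1 : ContDiffOn ℝ 1 v (Set.Ioo 0 Y))
    (hA : MeasureTheory.IntegrableOn (fun y => y ^ α * (v y) ^ 2) (Set.Ioo 0 Y))
    (hD : MeasureTheory.IntegrableOn (fun t => t ^ α * (deriv v t) ^ 2) (Set.Ioo 0 Y))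
    {δ : ℝ} (hδ0 : 0 < δ) (hδY : δ ≤ Y) :
    v 0 ^ 2 * (δ ^ (α+1) / (α+1)) ≤
      2 * (∫ y in Set.Ioo 0 Y, y ^ α * (v y) ^ 2)
        + (∫ t in Set.Ioo 0 Y, t ^ α * (deriv v t) ^ 2) * δ ^ 2 / (1-α) := by
  have h1α : (0:ℝ) < 1 - α := by linarith
  have hα1' : (0:ℝ) < α + 1 := by linarith
  set A : ℝ := ∫ y in Set.Ioo 0 Y, y ^ α * (v y) ^ 2 with hAdef
  set D : ℝ := ∫ t in Set.Ioo 0 Y, t ^ α * (deriv v t) ^ 2 with hDdef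
  have hDnn : 0 ≤ D := setIntegral_nonneg measurableSet_Ioo
    (fun t ht => mul_nonneg (Real.rpow_nonneg ht.1.le _) (sq_nonneg _))
  have hsubδ : Set.Ioo 0 δ ⊆ Set.Ioo 0 Y := fun x hx => ⟨hx.1, lt_of_lt_of_le hx.2 hδY⟩
  have hpt : ∀ y ∈ Set.Ioo 0 δ,
      y ^ α * (v 0) ^ 2 ≤ 2 * (y ^ α * (v y) ^ 2) + 2 * D / (1-α) * y := by
    intro y hyδ
    have hy : y ∈ Set.Ioo 0 Y := hsubδ hyδ
    have hy0 : (0:ℝ) < y := hy.1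
    have hp := ptwise hY hα1 hα2 hvc hv1 hD hy
    rw [← hDdef] at hp
    have e1 : y ^ α * y ^ (1 - α) = y := by
      rw [← Real.rpow_add hy0, show α + (1-α) = 1 by ring, Real.rpow_one]
    have h2 : y ^ α * (v 0) ^ 2 ≤ 2 * (y ^ α * (v y) ^ 2) + 2 * (y ^ α * (v y - v 0) ^ 2) := by
      nlinarith [mul_nonneg (Real.rpow_nonneg hy0.le α) (sq_nonneg (v y + (v y - v 0)))]
    have h3 : y ^ α * (v y - v 0) ^ 2 ≤ y * D / (1-α) := by
      calc y ^ α * (v y - v 0) ^ 2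
          ≤ y ^ α * (y ^ (1-α) / (1-α) * D) :=
            mul_le_mul_of_nonneg_left hp (Real.rpow_nonneg hy0.le α)
        _ = y * D / (1-α) := by
            rw [show y ^ α * (y ^ (1-α) / (1-α) * D) = (y ^ α * y ^ (1-α)) * D / (1-α) by ring,
              e1]
    have hring : 2 * D / (1 - α) * y = 2 * (y * D / (1 - α)) := by ring
    linarith [hring]
  have hIl : IntegrableOn (fun y => y ^ α * (v 0) ^ 2) (Set.Ioo 0 δ) := by
    have h := intervalIntegral.intervalIntegrable_rpow' (a := 0) (b := δ) hα1
    rw [intervalIntegrable_iff_integrableOn_Ioo_of_le hδ0.le] at h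
    exact h.mul_const _
  have hIA : IntegrableOn (fun y => y ^ α * (v y) ^ 2) (Set.Ioo 0 δ) := hA.mono_set hsubδ
  have hIid : IntegrableOn (fun y : ℝ => 2 * D / (1-α) * y) (Set.Ioo 0 δ) :=
    ((continuous_const.mul continuous_id).integrableOn_Icc).mono_set Set.Ioo_subset_Icc_self
  have hmono := setIntegral_mono_on hIl ((hIA.const_mul 2).add hIid) measurableSet_Ioo hpt
  have hLHS : ∫ y in Set.Ioo 0 δ, y ^ α * (v 0) ^ 2 = v 0 ^ 2 * (δ ^ (α+1) / (α+1)) := by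
    rw [MeasureTheory.integral_mul_const]
    have hint : ∫ y in Set.Ioo 0 δ, y ^ α = δ ^ (α+1) / (α+1) := by
      rw [← integral_Ioc_eq_integral_Ioo, ← intervalIntegral.integral_of_le hδ0.le,
        integral_rpow (Or.inl hα1), Real.zero_rpow (ne_of_gt hα1')]
      ring
    rw [hint]; ring
  have hRHS : ∫ y in Set.Ioo 0 δ, (2 * (y ^ α * (v y) ^ 2) + 2 * D / (1-α) * y)
      = 2 * (∫ y in Set.Ioo 0 δ, y ^ α * (v y) ^ 2) + 2 * D / (1-α) * (δ ^ 2 / 2) := by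
    rw [integral_add (hIA.const_mul 2) hIid, integral_const_mul, integral_const_mul]
    congr 1
    have : ∫ y in Set.Ioo 0 δ, y = δ ^ 2 / 2 := by
      rw [← integral_Ioc_eq_integral_Ioo, ← intervalIntegral.integral_of_le hδ0.le,
        integral_id]
      ring
    rw [this]
  have hAδ : ∫ y in Set.Ioo 0 δ, y ^ α * (v y) ^ 2 ≤ A := by
    apply setIntegral_mono_set hA
    · filter_upwards [ae_restrict_mem measurableSet_Ioo] with t ht
      exact mul_nonneg (Real.rpow_nonneg ht.1.le _) (sq_nonneg _)
    · exact HasSubset.Subset.eventuallyLE hsubδ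
  simp only [Pi.add_apply] at hmono
  rw [hLHS, hRHS] at hmono
  have : 2 * D / (1-α) * (δ ^ 2 / 2) = D * δ ^ 2 / (1-α) := by ring
  linarith


end Statement6Aux

/-- one-dimensional multiplicative weighted trace inequality. -/
theorem statement6 (Y α : ℝ) (hY : 0 < Y) (hα : α ∈ Set.Ioo (-1 : ℝ) 1) :
    ∃ C : ℝ, 0 < C ∧ ∀ v : ℝ → ℝ,
      ContinuousOn v (Set.Icc 0 Y) →
      ContDiffOn ℝ 1 v (Set.Ioo 0 Y) →
      MeasureTheory.IntegrableOn (fun y => y ^ α * (v y) ^ 2) (Set.Ioo 0 Y) →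
      MeasureTheory.IntegrableOn (fun y => y ^ α * (deriv v y) ^ 2) (Set.Ioo 0 Y) →
      (v 0) ^ 2 ≤ C * ((∫ y in Set.Ioo 0 Y, y ^ α * (v y) ^ 2) ^ ((1 - α) / 2) *
          (∫ y in Set.Ioo 0 Y, y ^ α * (deriv v y) ^ 2) ^ ((1 + α) / 2)
        + ∫ y in Set.Ioo 0 Y, y ^ α * (v y) ^ 2) := by
  obtain ⟨hα1, hα2⟩ := hα
  have h1α : (0:ℝ) < 1 - α := by linarith
  have hα1' : (0:ℝ) < α + 1 := by linarith
  have hYp : (0:ℝ) < Y ^ (α+1) := Real.rpow_pos_of_pos hY _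
  set K : ℝ := (α+1) * (2 + 1/(1-α)) with hKdef
  have hKpos : 0 < K := by positivity
  set C : ℝ := K / Y ^ (α+1) + K with hCdef
  have hCpos : 0 < C := by positivity
  refine ⟨C, hCpos, ?_⟩
  intro v hvc hv1 hA hD
  set A : ℝ := ∫ y in Set.Ioo 0 Y, y ^ α * (v y) ^ 2 with hAdef
  set D : ℝ := ∫ y in Set.Ioo 0 Y, y ^ α * (deriv v y) ^ 2 with hDdef
  have hAnn : 0 ≤ A := setIntegral_nonneg measurableSet_Ioo
    (fun t ht => mul_nonneg (Real.rpow_nonneg ht.1.le _) (sq_nonneg _))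
  have hDnn : 0 ≤ D := setIntegral_nonneg measurableSet_Ioo
    (fun t ht => mul_nonneg (Real.rpow_nonneg ht.1.le _) (sq_nonneg _))
  set M : ℝ := A ^ ((1-α)/2) * D ^ ((1+α)/2) with hMdef
  have hMnn : 0 ≤ M := mul_nonneg (Real.rpow_nonneg hAnn _) (Real.rpow_nonneg hDnn _)
  clear_value K C
  have hcore : ∀ δ : ℝ, 0 < δ → δ ≤ Y →
      v 0 ^ 2 ≤ (2 * A + D * δ ^ 2 / (1-α)) * ((α+1) / δ ^ (α+1)) := by
    intro δ hδ0 hδY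
    have h := Statement6Aux.core hY hα1 hα2 hvc hv1 hA hD hδ0 hδY
    rw [← hAdef, ← hDdef] at h
    have hδp : 0 < δ ^ (α+1) := Real.rpow_pos_of_pos hδ0 _
    have h2 : v 0 ^ 2 * (δ ^ (α+1) / (α+1)) * ((α+1) / δ ^ (α+1))
        ≤ (2 * A + D * δ ^ 2 / (1-α)) * ((α+1) / δ ^ (α+1)) :=
      mul_le_mul_of_nonneg_right h (div_nonneg hα1'.le hδp.le)
    have h3 : v 0 ^ 2 * (δ ^ (α+1) / (α+1)) * ((α+1) / δ ^ (α+1)) = v 0 ^ 2 := by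
      field_simp
    linarith
  rcases le_or_gt (D * Y ^ 2) A with h1 | h2
  · -- δ = Y
    have h := hcore Y hY le_rfl
    have hdv : D * Y ^ 2 / (1-α) ≤ A / (1-α) := div_le_div_of_nonneg_right h1 h1α.le
    have hb : 2 * A + D * Y ^ 2 / (1-α) ≤ A * (2 + 1/(1-α)) := by
      have : A * (2 + 1/(1-α)) = 2 * A + A / (1-α) := by ring
      linarith
    have h4 : v 0 ^ 2 ≤ A * (2 + 1/(1-α)) * ((α+1) / Y ^ (α+1)) :=
      le_trans h (mul_le_mul_of_nonneg_right hb (div_nonneg hα1'.le hYp.le))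
    have h5 : A * (2 + 1/(1-α)) * ((α+1) / Y ^ (α+1)) = K / Y ^ (α+1) * A := by
      rw [hKdef]; ring
    have h6 : C * (M + A) = C * M + K / Y ^ (α+1) * A + K * A := by
      rw [hCdef]; ring
    have h7 : 0 ≤ C * M := mul_nonneg hCpos.le hMnn
    have h8 : 0 ≤ K * A := mul_nonneg hKpos.le hAnn
    linarith
  · have hDpos : 0 < D := by
      by_contra hcon
      push_neg at hcon
      nlinarith [mul_nonpos_of_nonpos_of_nonneg hcon (sq_nonneg Y)]
    rcases eq_or_lt_of_le hAnn with hA0 | hApos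
    · -- A = 0 : let δ → 0
      have hv0 : v 0 ^ 2 ≤ 0 := by
        have hlim : Filter.Tendsto
            (fun δ : ℝ => (2 * A + D * δ ^ 2 / (1-α)) * ((α+1) / δ ^ (α+1)))
            (nhdsWithin 0 (Set.Ioi 0)) (nhds 0) := by
          have hEq : ∀ δ ∈ Set.Ioi (0:ℝ),
              (2 * A + D * δ ^ 2 / (1-α)) * ((α+1) / δ ^ (α+1))
                = D * (α+1) / (1-α) * δ ^ (1-α) := by
            intro δ hδ0
            rw [← hA0]
            have hδp : (0:ℝ) < δ ^ (α+1) := Real.rpow_pos_of_pos hδ0 _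
            have e : δ ^ (1-α) = δ ^ (2:ℕ) / δ ^ (α+1) := by
              rw [← Real.rpow_natCast δ 2, ← Real.rpow_sub hδ0]
              congr 1
              ring
            rw [e]
            field_simp
            ring
          have hten : Filter.Tendsto (fun δ : ℝ => D * (α+1) / (1-α) * δ ^ (1-α))
              (nhdsWithin 0 (Set.Ioi 0)) (nhds 0) := by
            have hc : ContinuousAt (fun x : ℝ => x ^ (1-α)) 0 :=
              Real.continuousAt_rpow_const 0 (1-α) (Or.inr h1α.le)
            have := (hc.tendsto.const_mul (D * (α+1) / (1-α))).mono_left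
              (nhdsWithin_le_nhds (s := Set.Ioi (0:ℝ)))
            simpa [Real.zero_rpow (ne_of_gt h1α)] using this
          exact Filter.Tendsto.congr' (Filter.eventuallyEq_of_mem self_mem_nhdsWithin
            (fun δ hδ => (hEq δ hδ).symm)) hten
        refine ge_of_tendsto hlim ?_
        filter_upwards [Ioo_mem_nhdsGT hY]
          with δ hδ
        exact hcore δ hδ.1 hδ.2.le
      have h9 : 0 ≤ C * (M + A) := mul_nonneg hCpos.le (add_nonneg hMnn hAnn)
      linarith
    · -- 0 < A : optimal δ
      set δ : ℝ := Real.sqrt (A / D) with hδdef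
      have hADpos : 0 < A / D := div_pos hApos hDpos
      have hδ0 : 0 < δ := Real.sqrt_pos.2 hADpos
      have hδY : δ ≤ Y := by
        have hlt : A / D ≤ Y ^ 2 := by
          rw [div_le_iff₀ hDpos]
          nlinarith
        calc δ ≤ Real.sqrt (Y ^ 2) := Real.sqrt_le_sqrt hlt
          _ = Y := Real.sqrt_sq hY.le
      have hδsq : δ ^ 2 = A / D := Real.sq_sqrt hADpos.le
      have hδpow : δ ^ (α+1) = (A / D) ^ ((α+1)/2) := by
        rw [hδdef, Real.sqrt_eq_rpow, ← Real.rpow_mul hADpos.le]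
        congr 1
        ring
      have h := hcore δ hδ0 hδY
      rw [hδsq, hδpow] at h
      have heq : (2 * A + D * (A / D) / (1-α)) * ((α+1) / (A / D) ^ ((α+1)/2)) = K * M := by
        rw [Real.div_rpow hAnn hDnn]
        rw [hMdef, show (1+α)/2 = (α+1)/2 by ring, hKdef]
        have hP : (0:ℝ) < A ^ ((α+1)/2) := Real.rpow_pos_of_pos hApos _
        have hR : (0:ℝ) < D ^ ((α+1)/2) := Real.rpow_pos_of_pos hDpos _
        have eA : A = A ^ ((α+1)/2) * A ^ ((1-α)/2) := by
          rw [← Real.rpow_add hApos, show (α+1)/2 + (1-α)/2 = 1 by ring, Real.rpow_one]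
        set P : ℝ := A ^ ((α+1)/2)
        set Q : ℝ := A ^ ((1-α)/2)
        set R : ℝ := D ^ ((α+1)/2)
        rw [show D * (A / D) = A by field_simp]
        rw [eA]
        field_simp
      rw [heq] at h
      have h6 : C * (M + A) = K * M + K / Y ^ (α+1) * M + C * A := by
        rw [hCdef]; ring
      have h7 : 0 ≤ K / Y ^ (α+1) * M := mul_nonneg (div_nonneg hKpos.le hYp.le) hMnn
      have h8 : 0 ≤ C * A := mul_nonneg hCpos.le hAnn
      linarith
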